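/- Let f: [0,1] → ℝ be continuous with f(0)=0 and f(1)=1. Then for each n ∈ ℕ there exist points 0 = t₀ < t₁ < ... < t_{n+1} = 1 such that the finite sequences (t_{i+1} − t_i)_{i=0}^{n} and (f(t_{i+1}) − f(t_i))_{i=0}^{n} consist of positive numbers and are equal up to a permutation of the indices. -/

import Mathlib

open Set Filter

private def Concl (f : ℝ → ℝ) (n : ℕ) : Prop :=
  ∃ t : ℕ → ℝ,
    t 0 = 0 ∧ t (n + 1) = 1 ∧
    (∀ i, i ≤ n → t i < t (i + 1)) ∧
    (∀ i, i ≤ n + 1 → t i ∈ Set.Icc (0:ℝ) 1) ∧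
    (∀ i, i ≤ n → 0 < t (i + 1) - t i ∧ 0 < f (t (i + 1)) - f (t i)) ∧
    ∃ σ : Equiv.Perm (Fin (n + 1)),
      ∀ i : Fin (n + 1),
        t ((i : ℕ) + 1) - t (i : ℕ) = f (t ((σ i : ℕ) + 1)) - f (t (σ i : ℕ))

private lemma mod_aux1 (n i : ℕ) (h : i < n + 1) (hi : 0 < i) :
    (i + n) % (n + 1) = i - 1 := by
  rw [Nat.mod_eq_sub_mod (by omega)]
  have h2 : i + n - (n + 1) = i - 1 := by omega
  rw [h2, Nat.mod_eq_of_lt (by omega)]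

private lemma mod_aux2 (n i : ℕ) (h : i < n + 1) :
    ((i + n) % (n + 1) + 1) % (n + 1) = i := by
  rcases Nat.eq_zero_or_pos i with rfl | hi
  · rw [Nat.zero_add, Nat.mod_eq_of_lt (show n < n + 1 by omega), Nat.mod_self]
  · rw [mod_aux1 n i h hi]
    have h2 : i - 1 + 1 = i := by omega
    rw [h2, Nat.mod_eq_of_lt h]

private lemma mod_aux3 (n i : ℕ) (h : i < n + 1) :
    ((i + 1) % (n + 1) + n) % (n + 1) = i := by
  rcases Nat.lt_or_ge i n with hi | hi
  · rw [Nat.mod_eq_of_lt (show i + 1 < n + 1 by omega), mod_aux1 n (i+1) (by omega) (by omega)]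
    omega
  · have h2 : i = n := by omega
    rw [h2, Nat.mod_self, Nat.zero_add, Nat.mod_eq_of_lt (show n < n + 1 by omega)]

private def cyc (n : ℕ) : Equiv.Perm (Fin (n + 1)) where
  toFun i := ⟨((i : ℕ) + n) % (n + 1), Nat.mod_lt _ n.succ_pos⟩
  invFun i := ⟨((i : ℕ) + 1) % (n + 1), Nat.mod_lt _ n.succ_pos⟩
  left_inv i := by
    apply Fin.ext
    exact mod_aux2 n i i.isLt
  right_inv i := by
    apply Fin.ext
    exact mod_aux3 n i i.isLt

private lemma cyc_val (n : ℕ) (i : Fin (n + 1)) :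
    ((cyc n i : Fin (n + 1)) : ℕ) = ((i : ℕ) + n) % (n + 1) := rfl

private noncomputable def seqT (f : ℝ → ℝ) (a : ℝ) : ℕ → ℝ
  | 0 => 0
  | i + 1 => min (a + f (seqT f a i)) 1
private lemma seqT_mem {f : ℝ → ℝ} (hid : ∀ x ∈ Icc (0:ℝ) 1, x ≤ f x) {a : ℝ}
    (ha : a ∈ Icc (0:ℝ) 1) : ∀ i, seqT f a i ∈ Icc (0:ℝ) 1 := by
  intro i
  induction i with
  | zero => exact ⟨le_refl 0, zero_le_one⟩
  | succ i ih =>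
    refine ⟨le_min ?_ zero_le_one, min_le_right _ _⟩
    have h2 := hid _ ih
    have := ih.1
    have := ha.1
    show (0:ℝ) ≤ a + f (seqT f a i)
    linarith

private lemma seqT_cont {f : ℝ → ℝ} (hc : ContinuousOn f (Icc 0 1))
    (hid : ∀ x ∈ Icc (0:ℝ) 1, x ≤ f x) (i : ℕ) :
    ContinuousOn (fun a => seqT f a i) (Icc 0 1) := by
  induction i with
  | zero => exact continuousOn_const
  | succ i ih =>
    have h2 : ContinuousOn (fun a => a + f (seqT f a i)) (Icc (0:ℝ) 1) :=
      continuousOn_id.add (hc.comp ih (fun a ha => seqT_mem hid ha i))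
    exact fun x hx => (h2 x hx).min continuousWithinAt_const

private lemma seqT_mono {f : ℝ → ℝ} (hid : ∀ x ∈ Icc (0:ℝ) 1, x ≤ f x) {a : ℝ}
    (ha : a ∈ Icc (0:ℝ) 1) : Monotone (seqT f a) := by
  apply monotone_nat_of_le_succ
  intro i
  have hm := seqT_mem hid ha i
  have h2 := hid _ hm
  exact le_min (by linarith [ha.1]) hm.2

private lemma seqT_zero {f : ℝ → ℝ} (h0 : f 0 = 0) : ∀ i, seqT f 0 i = 0 := by
  intro i
  induction i with
  | zero => rfl
  | succ i ih => simp [seqT, ih, h0]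
private lemma lemA (f : ℝ → ℝ) (hc : ContinuousOn f (Icc 0 1)) (h0 : f 0 = 0)
    (h1 : f 1 = 1) (hid : ∀ x ∈ Icc (0:ℝ) 1, x ≤ f x) (n : ℕ) : Concl f n := by
  classical
  set A : Set ℝ := {a ∈ Icc (0:ℝ) 1 | 1 ≤ seqT f a (n + 1)} with hAdef
  have hone : (1:ℝ) ∈ A := by
    refine ⟨⟨zero_le_one, le_refl 1⟩, ?_⟩
    have h11 : seqT f 1 1 = 1 := by
      show min (1 + f (seqT f 1 0)) 1 = 1
      have : seqT f 1 0 = 0 := rfl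
      rw [this, h0]
      simp
    calc (1:ℝ) = seqT f 1 1 := h11.symm
    _ ≤ seqT f 1 (n + 1) := seqT_mono hid ⟨zero_le_one, le_refl 1⟩ (by omega)
  have hclosed : IsClosed A := by
    have := (seqT_cont hc hid (n + 1)).preimage_isClosed_of_isClosed isClosed_Icc
      (isClosed_Ici (a := (1:ℝ)))
    convert this using 1
    rw [hAdef]; rfl
  have hbdd : BddBelow A := ⟨0, fun a ha => ha.1.1⟩
  have hmemA : sInf A ∈ A := hclosed.csInf_mem ⟨1, hone⟩ hbdd
  set c := sInf A with hcdef
  have hc01 : c ∈ Icc (0:ℝ) 1 := hmemA.1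
  have hcT : seqT f c (n + 1) = 1 :=
    le_antisymm (seqT_mem hid hc01 (n + 1)).2 hmemA.2
  have hcpos : 0 < c := by
    rcases lt_or_eq_of_le hc01.1 with h | h
    · exact h
    · exfalso
      have := hmemA.2
      rw [← h] at this
      rw [seqT_zero h0 (n + 1)] at this
      linarith
  have hlt : ∀ a ∈ Ico (0:ℝ) c, seqT f a (n + 1) < 1 := by
    intro a ha
    have hnotA : a ∉ A := fun hmem => absurd (csInf_le hbdd hmem) (not_le.mpr ha.2)
    have ha01 : a ∈ Icc (0:ℝ) 1 := ⟨ha.1, le_trans (le_of_lt ha.2) hc01.2⟩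
    rcases lt_or_ge (seqT f a (n + 1)) 1 with h | h
    · exact h
    · exact absurd ⟨ha01, h⟩ hnotA
  -- key inequality
  have hkey : c + f (seqT f c n) ≤ 1 := by
    have hG : ContinuousOn (fun a => a + f (seqT f a n)) (Icc (0:ℝ) 1) :=
      continuousOn_id.add (hc.comp (seqT_cont hc hid n) (fun a ha => seqT_mem hid ha n))
    have hsub : Ico (0:ℝ) c ⊆ Icc (0:ℝ) 1 :=
      fun a ha => ⟨ha.1, le_trans (le_of_lt ha.2) hc01.2⟩
    have hne : (nhdsWithin c (Ico (0:ℝ) c)).NeBot := by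
      rw [← mem_closure_iff_nhdsWithin_neBot, closure_Ico (ne_of_lt hcpos)]
      exact ⟨hc01.1, le_refl c⟩
    have htend : Tendsto (fun a => a + f (seqT f a n)) (nhdsWithin c (Ico (0:ℝ) c))
        (nhds (c + f (seqT f c n))) := (hG c hc01).mono hsub
    refine le_of_tendsto htend ?_
    filter_upwards [eventually_mem_nhdsWithin] with a ha
    have h2 : seqT f a (n + 1) < 1 := hlt a ha
    have h3 : min (a + f (seqT f a n)) 1 < 1 := h2
    rcases min_cases (a + f (seqT f a n)) 1 with ⟨heq, hle⟩ | ⟨heq, hle⟩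
    · exact hle
    · rw [heq] at h3; exact absurd h3 (lt_irrefl 1)
  -- the clamp never fires
  have hTn_lt : seqT f c n < 1 := by
    have h2 := hid _ (seqT_mem hid hc01 n)
    linarith
  have hTi_lt : ∀ i, i ≤ n → seqT f c i < 1 :=
    fun i hi => lt_of_le_of_lt (seqT_mono hid hc01 hi) hTn_lt
  have hstep : ∀ i, i ≤ n → seqT f c (i + 1) = c + f (seqT f c i) := by
    intro i hi
    rcases lt_or_eq_of_le hi with h | h
    · have h2 : seqT f c (i + 1) < 1 := hTi_lt (i + 1) (by omega)
      have h3 : seqT f c (i + 1) = min (c + f (seqT f c i)) 1 := rfl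
      rcases min_cases (c + f (seqT f c i)) 1 with ⟨heq, _⟩ | ⟨heq, hle⟩
      · rw [h3, heq]
      · rw [h3, heq] at h2; linarith
    · subst h
      show min (c + f (seqT f c i)) 1 = c + f (seqT f c i)
      exact min_eq_left hkey
  have hfinal : c + f (seqT f c n) = 1 := by
    rw [← hstep n (le_refl n), hcT]
  -- increments
  have hinc : ∀ i, i ≤ n → seqT f c i < seqT f c (i + 1) := by
    intro i hi
    rw [hstep i hi]
    have h2 := hid _ (seqT_mem hid hc01 i)
    linarith
  refine ⟨seqT f c, rfl, hcT, hinc, fun i _ => seqT_mem hid hc01 i, ?_, ?_⟩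
  · intro i hi
    refine ⟨by linarith [hinc i hi], ?_⟩
    rcases lt_or_eq_of_le hi with h | h
    · have e1 := hstep i hi
      have e2 := hstep (i + 1) (by omega)
      have h3 := hinc (i + 1) (by omega)
      linarith [e1, e2, h3]
    · subst h
      rw [hcT, h1]
      linarith [hfinal]
  · refine ⟨cyc n, ?_⟩
    intro i
    rcases Nat.eq_zero_or_pos (i : ℕ) with h | h
    · have hσ : ((cyc n i : Fin (n + 1)) : ℕ) = n := by
        rw [cyc_val, h, Nat.zero_add, Nat.mod_eq_of_lt (by omega)]
      rw [hσ, h]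
      have e0 : seqT f c 1 = c := by
        have h4 := hstep 0 (by omega)
        rw [show seqT f c 0 = 0 from rfl, h0] at h4
        norm_num at h4
        exact h4
      have : seqT f c 0 = 0 := rfl
      rw [this, e0, hcT, h1]
      linarith [hfinal]
    · obtain ⟨j, hj⟩ : ∃ j, (i : ℕ) = j + 1 := ⟨(i : ℕ) - 1, by omega⟩
      have hjn : j + 1 < n + 1 := hj ▸ i.isLt
      have hσ : ((cyc n i : Fin (n + 1)) : ℕ) = j := by
        rw [cyc_val, hj, mod_aux1 n (j + 1) hjn (by omega)]
        omega
      rw [hσ, hj]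
      have e1 := hstep j (by omega)
      have e2 := hstep (j + 1) (by omega)
      linarith [e1, e2]
private lemma lemB (f : ℝ → ℝ) (hc : ContinuousOn f (Icc 0 1)) (h0 : f 0 = 0)
    (h1 : f 1 = 1) (hid : ∀ x ∈ Icc (0:ℝ) 1, f x ≤ x) (n : ℕ) : Concl f n := by
  set g : ℝ → ℝ := fun x => 1 - f (1 - x) with hgdef
  have hkey : ∀ y : ℝ, f (1 - y) = 1 - g y := fun y => by simp [hgdef]
  have hg0 : g 0 = 0 := by simp [hgdef, h1]
  have hg1 : g 1 = 1 := by simp [hgdef, h0]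
  have hgc : ContinuousOn g (Icc 0 1) := by
    apply continuousOn_const.sub
    apply hc.comp (continuousOn_const.sub continuousOn_id)
    intro x hx
    exact ⟨by simp; linarith [hx.2], by simp; linarith [hx.1]⟩
  have hgid : ∀ x ∈ Icc (0:ℝ) 1, x ≤ g x := by
    intro x hx
    have := hid (1 - x) ⟨by linarith [hx.2], by linarith [hx.1]⟩
    simp [hgdef]
    linarith
  obtain ⟨s, hs0, hs1, hmono, hmem, hpos, σ', hσ'⟩ := lemA g hgc hg0 hg1 hgid n
  refine ⟨fun i => 1 - s (n + 1 - i), by simp [hs1], by simp [hs0], ?_, ?_, ?_, ?_⟩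
  · intro i hi
    dsimp only
    have e1 : n + 1 - i = (n - i) + 1 := by omega
    have e2 : n + 1 - (i + 1) = n - i := by omega
    rw [e1, e2]
    have := hmono (n - i) (by omega)
    linarith
  · intro i _
    dsimp only
    have := hmem (n + 1 - i) (by omega)
    exact ⟨by linarith [this.2], by linarith [this.1]⟩
  · intro i hi
    dsimp only
    have e1 : n + 1 - i = (n - i) + 1 := by omega
    have e2 : n + 1 - (i + 1) = n - i := by omega
    have hp := hpos (n - i) (by omega)
    constructor
    · rw [e1, e2]
      linarith [hp.1]
    · rw [e1, e2, hkey (s ((n - i) + 1)), hkey (s (n - i))]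
      linarith [hp.2]
  · refine ⟨(Fin.revPerm.trans σ').trans Fin.revPerm, ?_⟩
    intro i
    set j : Fin (n + 1) := Fin.rev i with hjdef
    set m : Fin (n + 1) := σ' j with hmdef
    have hjval : (j : ℕ) = n - (i : ℕ) := by
      rw [hjdef, Fin.val_rev]
      omega
    have hσval : ((((Fin.revPerm.trans σ').trans Fin.revPerm) i : Fin (n+1)) : ℕ)
        = n - (m : ℕ) := by
      simp [Equiv.trans_apply, hmdef, hjdef, Fin.val_rev]
      try omega
    have hin : (i : ℕ) ≤ n := Nat.lt_succ_iff.mp i.isLt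
    have hmn : (m : ℕ) ≤ n := Nat.lt_succ_iff.mp m.isLt
    dsimp only
    rw [hσval]
    have e1 : n + 1 - (i : ℕ) = ((j : ℕ)) + 1 := by omega
    have e2 : n + 1 - ((i : ℕ) + 1) = (j : ℕ) := by omega
    have e3 : n + 1 - (n - (m : ℕ)) = (m : ℕ) + 1 := by omega
    have e4 : n + 1 - ((n - (m : ℕ)) + 1) = (m : ℕ) := by omega
    have hperm := hσ' j
    rw [← hmdef] at hperm
    -- goal : (1 - s (n+1-(i+1))) - (1 - s (n+1-i)) =
    --        f (1 - s (n+1-((n-m)+1))) - f (1 - s (n+1-(n-m)))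
    rw [e1, e2, e3, e4, hkey (s ((m : ℕ))), hkey (s ((m : ℕ) + 1))]
    linarith [hperm]
private lemma mainLem : ∀ n : ℕ, ∀ f : ℝ → ℝ, ContinuousOn f (Icc 0 1) →
    f 0 = 0 → f 1 = 1 → Concl f n := by
  intro n
  induction n with
  | zero =>
    intro f hc h0 h1
    refine ⟨fun i => if i = 0 then 0 else 1, by simp, by simp, ?_, ?_, ?_,
      Equiv.refl _, ?_⟩
    · intro i hi
      have : i = 0 := by omega
      subst this
      norm_num
    · intro i _
      by_cases h : i = 0 <;> simp [h]
    · intro i hi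
      have : i = 0 := by omega
      subst this
      norm_num [h0, h1]
    · intro i
      have : (i : ℕ) = 0 := by omega
      simp [this, h0, h1]
  | succ n ih =>
    intro f hc h0 h1
    by_cases hA : ∀ x ∈ Icc (0:ℝ) 1, x ≤ f x
    · exact lemA f hc h0 h1 hA (n + 1)
    by_cases hB : ∀ x ∈ Icc (0:ℝ) 1, f x ≤ x
    · exact lemB f hc h0 h1 hB (n + 1)
    push_neg at hA hB
    obtain ⟨q, hq01, hq⟩ := hA
    obtain ⟨p, hp01, hp⟩ := hB
    -- p < f p, f q < q ; find interior fixed point z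
    have hp0 : (0:ℝ) < p := by
      rcases lt_or_eq_of_le hp01.1 with h | h
      · exact h
      · exfalso; rw [← h, h0] at hp; linarith [hp, h.symm ▸ hp]
    have hp1 : p < 1 := by
      rcases lt_or_eq_of_le hp01.2 with h | h
      · exact h
      · exfalso; rw [h, h1] at hp; linarith
    have hq0 : (0:ℝ) < q := by
      rcases lt_or_eq_of_le hq01.1 with h | h
      · exact h
      · exfalso; rw [← h, h0] at hq; linarith
    have hq1 : q < 1 := by
      rcases lt_or_eq_of_le hq01.2 with h | h
      · exact h
      · exfalso; rw [h, h1] at hq; linarith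
    have huIcc : uIcc p q ⊆ Icc (0:ℝ) 1 := by
      intro x hx
      rw [Set.mem_uIcc] at hx
      rcases hx with ⟨hx1, hx2⟩ | ⟨hx1, hx2⟩ <;> exact ⟨by linarith, by linarith⟩
    have hcont2 : ContinuousOn (fun x => f x - x) (uIcc p q) :=
      ((hc.mono huIcc).sub continuousOn_id)
    have h0mem : (0:ℝ) ∈ uIcc ((fun x => f x - x) p) ((fun x => f x - x) q) := by
      rw [Set.mem_uIcc]
      right
      exact ⟨by dsimp; linarith, by dsimp; linarith⟩
    obtain ⟨z, hzmem, hz⟩ := intermediate_value_uIcc hcont2 h0mem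
    have hfz : f z = z := by
      have h2 := hz
      dsimp at h2
      linarith
    rw [Set.mem_uIcc] at hzmem
    have hz0 : 0 < z := by
      rcases hzmem with ⟨hx1, hx2⟩ | ⟨hx1, hx2⟩ <;> linarith
    have hz1 : z < 1 := by
      rcases hzmem with ⟨hx1, hx2⟩ | ⟨hx1, hx2⟩ <;> linarith
    set w : ℝ := 1 - z with hwdef
    have hw0 : 0 < w := by simp [hwdef]; linarith
    set g : ℝ → ℝ := fun x => (f (z + w * x) - z) / w with hgdef
    have hmaps : MapsTo (fun x => z + w * x) (Icc (0:ℝ) 1) (Icc (0:ℝ) 1) := by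
      intro x hx
      constructor
      · have : 0 ≤ w * x := mul_nonneg (le_of_lt hw0) hx.1
        dsimp; linarith
      · have : w * x ≤ w := by nlinarith [hx.2]
        dsimp; rw [hwdef] at this ⊢; linarith
    have hgc : ContinuousOn g (Icc 0 1) := by
      apply ContinuousOn.div_const
      apply ContinuousOn.sub _ continuousOn_const
      exact hc.comp (continuousOn_const.add (continuousOn_const.mul continuousOn_id)) hmaps
    have hkey : ∀ y : ℝ, f (z + w * y) = z + w * g y := by
      intro y
      rw [hgdef]
      dsimp
      field_simp
      ring
    have hg0 : g 0 = 0 := by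
      rw [hgdef]
      dsimp
      rw [mul_zero, add_zero, hfz]
      simp
    have hg1 : g 1 = 1 := by
      rw [hgdef]
      dsimp
      rw [mul_one, hwdef, show z + (1 - z) = 1 by ring, h1]
      field_simp
      exact div_self (sub_ne_zero.mpr hz1.ne')
    obtain ⟨s, hs0, hs1, hmono, hmem, hpos, σ', hσ'⟩ := ih g hgc hg0 hg1
    set t : ℕ → ℝ := fun i => if i = 0 then 0 else z + w * s (i - 1) with htdef
    have ht0 : t 0 = 0 := by simp [htdef]
    have htsucc : ∀ i, t (i + 1) = z + w * s i := by
      intro i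
      simp only [htdef]
      rw [if_neg (by omega : ¬ (i + 1 = 0))]
      norm_num
    have hfval : ∀ i, f (t (i + 1)) = z + w * g (s i) := by
      intro i
      rw [htsucc i, hkey]
    refine ⟨t, ht0, ?_, ?_, ?_, ?_, ?_⟩
    · rw [htsucc (n + 1), hs1, hwdef]; ring
    · intro i hi
      rcases Nat.eq_zero_or_pos i with rfl | hpos_i
      · rw [ht0, htsucc 0, hs0, mul_zero, add_zero]; exact hz0
      · obtain ⟨j, rfl⟩ : ∃ j, i = j + 1 := ⟨i - 1, by omega⟩
        rw [htsucc j, htsucc (j + 1)]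
        have := hmono j (by omega)
        nlinarith
    · intro i hi
      rcases Nat.eq_zero_or_pos i with rfl | hpos_i
      · rw [ht0]; exact ⟨le_refl 0, zero_le_one⟩
      · obtain ⟨j, rfl⟩ : ∃ j, i = j + 1 := ⟨i - 1, by omega⟩
        rw [htsucc j]
        have hm := hmem j (by omega)
        constructor
        · nlinarith [hm.1]
        · nlinarith [hm.2, hw0]
    · intro i hi
      rcases Nat.eq_zero_or_pos i with rfl | hpos_i
      · rw [ht0, htsucc 0, hs0, mul_zero, add_zero]
        constructor
        · linarith
        · rw [hfz, h0]; linarith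
      · obtain ⟨j, rfl⟩ : ∃ j, i = j + 1 := ⟨i - 1, by omega⟩
        have hpj := hpos j (by omega)
        constructor
        · rw [htsucc j, htsucc (j + 1)]
          nlinarith [hpj.1]
        · rw [hfval j, hfval (j + 1)]
          nlinarith [hpj.2]
    · refine ⟨Equiv.Perm.decomposeFin.symm (0, σ'), ?_⟩
      intro i
      induction i using Fin.cases with
      | zero =>
        rw [Equiv.Perm.decomposeFin_symm_apply_zero]
        simp only [Fin.val_zero]
        rw [ht0, htsucc 0, hs0, mul_zero, add_zero, hfz, h0]
      | succ j =>
        rw [Equiv.Perm.decomposeFin_symm_apply_succ]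
        simp only [Equiv.swap_self, Equiv.refl_apply, Fin.val_succ]
        rw [htsucc ((j : ℕ)), htsucc ((j : ℕ) + 1),
          hfval ((σ' j : ℕ)), hfval ((σ' j : ℕ) + 1)]
        have := hσ' j
        linarith [mul_le_mul_of_nonneg_left (le_of_eq this) (le_of_lt hw0),
          mul_le_mul_of_nonneg_left (ge_of_eq this) (le_of_lt hw0)]
theorem stmt_1 (f : ℝ → ℝ)
    (hc : ContinuousOn f (Set.Icc 0 1))
    (h0 : f 0 = 0) (h1 : f 1 = 1) (n : ℕ) :
    ∃ t : ℕ → ℝ,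
      t 0 = 0 ∧ t (n + 1) = 1 ∧
      (∀ i, i ≤ n → t i < t (i + 1)) ∧
      (∀ i, i ≤ n + 1 → t i ∈ Set.Icc (0:ℝ) 1) ∧
      (∀ i, i ≤ n → 0 < t (i + 1) - t i ∧ 0 < f (t (i + 1)) - f (t i)) ∧
      ∃ σ : Equiv.Perm (Fin (n + 1)),
        ∀ i : Fin (n + 1),
          t ((i : ℕ) + 1) - t (i : ℕ) = f (t ((σ i : ℕ) + 1)) - f (t (σ i : ℕ)) := by
  exact mainLem n f hc h0 h1
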